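/- Let u₁,...,uₙ ∈ S² (n ≥ 4) be points in general position that are not contained in any closed hemisphere. Then there exist positive real numbers λ₁,...,λₙ with λ₁u₁ + ... + λₙuₙ = 0; consequently there exists a closed polygon P = [v₁,...,vₙ] in ℝ³ whose unit edge vectors are exactly u₁,...,uₙ (i.e., Q = [u₁,...,uₙ] is the tangent indicatrix of P). -/

import Mathlib

open scoped RealInnerProductSpace

noncomputable section

/-- ℝ³ as EuclideanSpace. -/
abbrev E3 : Type := EuclideanSpace ℝ (Fin 3)

/-- Determinant of the 3×3 matrix with columns u, v, w. -/
def det3 (u v w : E3) : ℝ :=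
  Matrix.det !![u 0, v 0, w 0; u 1, v 1, w 1; u 2, v 2, w 2]

/-- The minimizing great-circle arc joining two non-antipodal points of S². -/
def sphericalEdge (u v : E3) : Set E3 :=
  {p | ∃ a b : ℝ, 0 ≤ a ∧ 0 ≤ b ∧ (a ≠ 0 ∨ b ≠ 0) ∧
    p = ‖a • u + b • v‖⁻¹ • (a • u + b • v)}

/-- A spherical polygon: a cyclic sequence of distinct points of S² with consecutive
vertices non-antipodal. -/
def IsSphericalPolygon {n : ℕ} (u : ZMod n → E3) : Prop :=
  (∀ i, ‖u i‖ = 1) ∧ Function.Injective u ∧ (∀ i, u (i + 1) ≠ -(u i))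

/-- The i-th edge of a spherical polygon. -/
def polyEdge {n : ℕ} (u : ZMod n → E3) (i : ZMod n) : Set E3 :=
  sphericalEdge (u i) (u (i + 1))

/-- A spherical polygon is simple if non-adjacent edges are disjoint and adjacent
edges meet only in their common vertex. -/
def IsSimple {n : ℕ} (u : ZMod n → E3) : Prop :=
  (∀ i j : ZMod n, j ≠ i → j ≠ i + 1 → i ≠ j + 1 →
      Disjoint (polyEdge u i) (polyEdge u j)) ∧
  (∀ i : ZMod n, polyEdge u i ∩ polyEdge u (i + 1) = {u (i + 1)})

/-- A family of points of S² is balanced if it is not contained in any closed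
hemisphere. -/
def IsBalanced {ι : Type*} (u : ι → E3) : Prop :=
  ∀ w : E3, w ≠ 0 → ∃ i, ⟪u i, w⟫ < 0

/-- Points in general position: no three on a common great circle. -/
def GeneralPosition {ι : Type*} (u : ι → E3) : Prop :=
  ∀ i j k : ι, i ≠ j → i ≠ k → j ≠ k → det3 (u i) (u j) (u k) ≠ 0

/-- Spherical inflection of a spherical polygon at index i. -/
def Inflection {n : ℕ} (u : ZMod n → E3) (i : ZMod n) : Prop :=
  det3 (u (i - 1)) (u i) (u (i + 1)) * det3 (u i) (u (i + 1)) (u (i + 2)) < 0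

/-- The polygon Q − uᵢ obtained by deleting the vertex uᵢ, reindexed over ZMod (n-1),
starting at u_{i+1}. -/
def eraseVertex {n : ℕ} (u : ZMod n → E3) (i : ZMod n) : ZMod (n - 1) → E3 :=
  fun j => u (i + 1 + (j.val : ZMod n))

/-- The open cone spanned by three vectors. -/
def openCone3 (a b c : E3) : Set E3 :=
  {x | ∃ l₁ l₂ l₃ : ℝ, 0 < l₁ ∧ 0 < l₂ ∧ 0 < l₃ ∧ x = l₁ • a + l₂ • b + l₃ • c}

end

/-- Points of S² in general position and not contained in any closed
hemisphere admit positive scalings summing to zero; consequently they are the unit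
edge vectors of some closed polygon in ℝ³. -/
theorem stmt_3 {n : ℕ} [NeZero n] (hn : 4 ≤ n) (u : ZMod n → E3)
    (hsph : ∀ i, ‖u i‖ = 1)
    (hgp : GeneralPosition u)
    (hbal : IsBalanced u) :
    (∃ lam : ZMod n → ℝ, (∀ i, 0 < lam i) ∧ ∑ i, lam i • u i = 0) ∧
    (∃ v : ZMod n → E3, (∀ i, v (i + 1) ≠ v i) ∧
      ∀ i, u i = ‖v (i + 1) - v i‖⁻¹ • (v (i + 1) - v i)) := by
  classical
  have hn0 : 0 < n := by omega
  have hcard : Fintype.card (ZMod n) = n := ZMod.card n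
  -- injectivity of u
  have huinj : Function.Injective u := by
    intro i j hij
    by_contra hne
    have hk : ({i, j}ᶜ : Finset (ZMod n)).Nonempty := by
      rw [← Finset.card_pos, Finset.card_compl, hcard]
      have hle : ({i, j} : Finset (ZMod n)).card ≤ 2 :=
        (Finset.card_insert_le _ _).trans (by simp)
      omega
    obtain ⟨k, hkmem⟩ := hk
    simp only [Finset.mem_compl, Finset.mem_insert, Finset.mem_singleton, not_or] at hkmem
    obtain ⟨hki, hkj⟩ := hkmem
    apply hgp i j k hne (Ne.symm hki) (Ne.symm hkj)
    rw [det3, hij]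
    simp [Matrix.det_fin_three]
  -- quantitative balancedness
  have hne' : (Finset.univ : Finset (ZMod n)).Nonempty := Finset.univ_nonempty
  set g : E3 → ℝ := fun w => Finset.univ.inf' hne' (fun i => ⟪u i, w⟫) with hgdef
  have hgc : Continuous g := by
    apply Continuous.finset_inf'_apply hne'
    intro i _
    exact Continuous.inner continuous_const continuous_id
  have hsphn : (Metric.sphere (0:E3) 1).Nonempty :=
    NormedSpace.sphere_nonempty.mpr zero_le_one
  obtain ⟨w₀, hw₀mem, hw₀max⟩ :=
    (isCompact_sphere (0:E3) 1).exists_isMaxOn hsphn hgc.continuousOn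
  have hw₀norm : ‖w₀‖ = 1 := by simpa using hw₀mem
  obtain ⟨i₀, hi₀⟩ := hbal w₀ (by
    intro h; rw [h, norm_zero] at hw₀norm; norm_num at hw₀norm)
  set δ : ℝ := -g w₀ with hδdef
  have hδpos : 0 < δ := by
    have h1 : g w₀ ≤ ⟪u i₀, w₀⟫ := Finset.inf'_le _ (Finset.mem_univ _)
    simp only [hδdef]
    linarith
  have hδ : ∀ w : E3, w ≠ 0 → ∃ i, ⟪u i, w⟫ ≤ -δ * ‖w‖ := by
    intro w hw
    have hwn : (0:ℝ) < ‖w‖ := norm_pos_iff.mpr hw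
    have hmem : (‖w‖⁻¹ • w) ∈ Metric.sphere (0:E3) 1 := by
      simp [norm_smul, abs_of_nonneg (le_of_lt (inv_pos.mpr hwn)),
        inv_mul_cancel₀ (ne_of_gt hwn)]
    have hle : g (‖w‖⁻¹ • w) ≤ g w₀ := hw₀max hmem
    obtain ⟨i, _, hieq⟩ :=
      Finset.exists_mem_eq_inf' hne' (fun i => ⟪u i, ‖w‖⁻¹ • w⟫)
    refine ⟨i, ?_⟩
    have h1 : ⟪u i, ‖w‖⁻¹ • w⟫ ≤ -δ := by
      rw [← hieq, hδdef, neg_neg]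
      exact hle
    have h2 : ⟪u i, ‖w‖⁻¹ • w⟫ = ‖w‖⁻¹ * ⟪u i, w⟫ := real_inner_smul_right _ _ _
    rw [h2] at h1
    have := mul_le_mul_of_nonneg_left h1 (le_of_lt hwn)
    rw [← mul_assoc, mul_inv_cancel₀ (ne_of_gt hwn), one_mul] at this
    linarith
  -- main membership claim
  set s : E3 := ∑ i, u i with hsdef
  have hnR : (0:ℝ) < (n:ℝ) := by exact_mod_cast hn0
  set ε : ℝ := δ / n with hεdef
  have hεpos : 0 < ε := div_pos hδpos hnR
  have hεn : ε * n = δ := div_mul_cancel₀ δ (ne_of_gt hnR)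
  have hKmem : (-ε) • s ∈ convexHull ℝ (Set.range u) := by
    by_contra hnotmem
    obtain ⟨f, c, hfc, hcf⟩ := geometric_hahn_banach_closed_point
      (convex_convexHull ℝ _)
      (((Set.finite_range u).isCompact_convexHull (𝕜 := ℝ)).isClosed) hnotmem
    set w : E3 := -(InnerProductSpace.toDual ℝ E3).symm f with hwdef
    have hfw : ∀ y : E3, f y = -⟪w, y⟫ := by
      intro y
      rw [hwdef, inner_neg_left, neg_neg, InnerProductSpace.toDual_symm_apply]
    have hw0 : w ≠ 0 := by
      intro h
      have h1 : f (u 0) < c := hfc _ (subset_convexHull ℝ _ ⟨0, rfl⟩)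
      have h2 : c < f ((-ε) • s) := hcf
      rw [hfw, h, inner_zero_left] at h1
      rw [hfw, h, inner_zero_left] at h2
      linarith
    obtain ⟨i, hi⟩ := hδ w hw0
    have hKi : f (u i) < c := hfc _ (subset_convexHull ℝ _ ⟨i, rfl⟩)
    have hfi : δ * ‖w‖ ≤ f (u i) := by
      rw [hfw, real_inner_comm]
      linarith
    have hws : ⟪w, s⟫ = ∑ j, ⟪w, u j⟫ := inner_sum _ _ _
    have habs : ∀ j : ZMod n, ⟪w, u j⟫ ≤ ‖w‖ := by
      intro j
      have h1 := abs_real_inner_le_norm w (u j)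
      rw [hsph j, mul_one] at h1
      linarith [abs_le.mp h1]
    have hupp : ⟪w, s⟫ ≤ (n:ℝ) * ‖w‖ := by
      rw [hws]
      calc ∑ j, ⟪w, u j⟫ ≤ ∑ _j : ZMod n, ‖w‖ := Finset.sum_le_sum (fun j _ => habs j)
      _ = (n:ℝ) * ‖w‖ := by simp [Finset.sum_const, hcard, mul_comm]
    have hfs : f ((-ε) • s) ≤ ε * (n:ℝ) * ‖w‖ := by
      rw [hfw]
      have h3 : ⟪w, (-ε) • s⟫ = -ε * ⟪w, s⟫ := real_inner_smul_right _ _ _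
      rw [h3]
      nlinarith [hεpos, hupp]
    rw [hεn] at hfs
    linarith
  -- extract positive weights
  have hrange : Set.range u = ↑(Finset.univ.image u) := by simp
  rw [hrange, Finset.convexHull_eq] at hKmem
  obtain ⟨wt, hwt0, hwt1, hwtc⟩ := hKmem
  rw [Finset.centerMass_eq_of_sum_1 _ _ hwt1] at hwtc
  rw [Finset.sum_image (fun i _ j _ h => huinj h)] at hwtc
  simp only [id] at hwtc
  obtain ⟨lam, hlampos, hlamsum⟩ :
      ∃ lam : ZMod n → ℝ, (∀ i, 0 < lam i) ∧ ∑ i, lam i • u i = 0 := by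
    refine ⟨fun i => wt (u i) + ε, fun i => ?_, ?_⟩
    · have := hwt0 (u i) (Finset.mem_image_of_mem u (Finset.mem_univ i))
      show (0:ℝ) < wt (u i) + ε
      linarith
    · have : ∑ i, (wt (u i) + ε) • u i
          = (∑ i, wt (u i) • u i) + ε • s := by
        rw [hsdef, Finset.smul_sum, ← Finset.sum_add_distrib]
        congr 1
        ext i
        rw [add_smul]
      rw [this, hwtc, neg_smul, neg_add_cancel]
  refine ⟨⟨lam, hlampos, hlamsum⟩, ?_⟩
  -- construct polygon
  set v : ZMod n → E3 :=
    fun j => ∑ i ∈ Finset.range j.val, lam (i : ZMod n) • u (i : ZMod n) with hvdef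
  have hsum_range :
      ∑ i ∈ Finset.range n, lam (i : ZMod n) • u (i : ZMod n) = 0 := by
    rw [← hlamsum]
    exact (Finset.sum_nbij' (fun (j : ZMod n) => j.val) (fun i => (i : ZMod n))
      (fun j _ => Finset.mem_range.mpr (ZMod.val_lt j))
      (fun i _ => Finset.mem_univ _)
      (fun j _ => ZMod.natCast_rightInverse j)
      (fun i hi => ZMod.val_cast_of_lt (Finset.mem_range.mp hi))
      (fun j _ => by rw [ZMod.natCast_rightInverse j])).symm
  have hstep : ∀ j : ZMod n, v (j + 1) - v j = lam j • u j := by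
    intro j
    have hjval : ((j.val : ℕ) : ZMod n) = j := ZMod.natCast_rightInverse j
    by_cases hc : j.val + 1 < n
    · have hval1 : (j + 1).val = j.val + 1 := by
        have h1 : ((j.val + 1 : ℕ) : ZMod n) = j + 1 := by
          push_cast [hjval]; ring
        rw [← h1, ZMod.val_cast_of_lt hc]
      rw [hvdef]
      simp only [hval1, Finset.sum_range_succ, hjval]
      abel
    · have hje : j.val = n - 1 := by have := ZMod.val_lt j; omega
      have hj1 : j + 1 = 0 := by
        rw [← hjval, hje]
        have h2 : ((n - 1 : ℕ) : ZMod n) + 1 = ((n - 1 + 1 : ℕ) : ZMod n) := by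
          push_cast; ring
        rw [h2, Nat.sub_add_cancel hn0, ZMod.natCast_self]
      have hval0 : (j + 1).val = 0 := by rw [hj1, ZMod.val_zero]
      have hsplit := Finset.sum_range_succ
        (fun i : ℕ => lam (i : ZMod n) • u (i : ZMod n)) (n - 1)
      rw [Nat.sub_add_cancel hn0] at hsplit
      have hcast : ((n - 1 : ℕ) : ZMod n) = j := by rw [← hje, hjval]
      rw [hcast] at hsplit
      have hvj : v j = -(lam j • u j) := by
        have h4 := hsum_range
        rw [hsplit] at h4
        have h5 : v j = ∑ i ∈ Finset.range (n - 1), lam (i : ZMod n) • u (i : ZMod n) := by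
          rw [hvdef]
          simp only [hje]
        rw [h5]
        exact eq_neg_of_add_eq_zero_left h4
      rw [hvdef]
      simp only [hval0, Finset.range_zero, Finset.sum_empty]
      rw [show (∑ i ∈ Finset.range (ZMod.val j), lam (i : ZMod n) • u (i : ZMod n)) = v j from rfl, hvj]
      abel
  refine ⟨v, ?_, ?_⟩
  · intro i h
    have h1 := hstep i
    rw [h, sub_self] at h1
    have h2 : lam i • u i ≠ 0 := by
      apply smul_ne_zero (ne_of_gt (hlampos i))
      intro h3
      have := hsph i
      rw [h3, norm_zero] at this
      norm_num at this
    exact h2 h1.symm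
  · intro i
    rw [hstep i, norm_smul, hsph i, mul_one,
      Real.norm_eq_abs, abs_of_pos (hlampos i), smul_smul,
      inv_mul_cancel₀ (ne_of_gt (hlampos i)), one_smul]
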